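/- Let q be a prime power and let m, n, δ be positive integers with δ ≤ min{m, n}. Then there exists an [m × n, δ]_q maximum rank-metric code, i.e., an F_q-linear subspace of the space of m × n matrices over F_q of dimension max{m,n}·(min{m,n} − δ + 1) in which every nonzero matrix has rank at least δ. -/

import Mathlib

open Module Polynomial

noncomputable section MRDAux

variable (F : Type*) [Field F] [Fintype F]

/-- A field extension of `F` of degree `m`: the splitting field of `X^(q^m) - X`. -/
abbrev MRDExt (m : ℕ) : Type _ :=
  Polynomial.SplittingField (X ^ (Fintype.card F ^ m) - X : F[X])

instance (m : ℕ) : Finite (MRDExt F m) := Module.finite_of_finite F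

lemma finrank_MRDExt (m : ℕ) (hm : m ≠ 0) : finrank F (MRDExt F m) = m := by
  classical
  have hq : 1 < Fintype.card F := Fintype.one_lt_card
  obtain ⟨p, hchar⟩ := CharP.exists F
  haveI := hchar
  obtain ⟨a, hp, hF⟩ := FiniteField.card F p
  haveI := Fact.mk hp
  set q := Fintype.card F with hqdef
  set K := MRDExt F m with hKdef
  haveI : Fintype K := Fintype.ofFinite K
  haveI : CharP K p := charP_of_injective_algebraMap (algebraMap F K).injective p
  set g : F[X] := X ^ q ^ m - X with hg
  have gne : g ≠ 0 := FiniteField.X_pow_card_pow_sub_X_ne_zero F hm hq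
  have hpq : p ∣ q := by
    rw [hF]
    exact dvd_pow_self p (by exact_mod_cast a.pos.ne')
  have hsep : g.Separable :=
    galois_poly_separable p (q ^ m) (hpq.trans (dvd_pow_self q hm))
  have hsplit : Splits (g.map (algebraMap F K)) := SplittingField.splits g
  have key : Fintype.card (g.rootSet K) = q ^ m := by
    rw [card_rootSet_eq_natDegree hsep hsplit, hg,
      FiniteField.X_pow_card_pow_sub_X_natDegree_eq F hm hq]
  have hroot_iff : ∀ x : K, x ∈ g.rootSet K ↔ x ^ q ^ m = x := by
    intro x
    rw [mem_rootSet_of_ne gne, hg]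
    simp only [map_sub, map_pow, aeval_X]
    rw [sub_eq_zero]
  have hexp : p ^ ((a : ℕ) * m) = q ^ m := by rw [pow_mul, ← hF]
  have huniv : g.rootSet K = Set.univ := by
    rw [Set.eq_univ_iff_forall]
    intro x
    have hx : x ∈ (⊤ : Subalgebra F K) := trivial
    rw [← Polynomial.IsSplittingField.adjoin_rootSet K g, Algebra.mem_adjoin_iff] at hx
    have hle : Subring.closure (Set.range (algebraMap F K) ∪ g.rootSet K) ≤
        RingHom.eqLocus (iterateFrobenius K p ((a : ℕ) * m)) (RingHom.id K) := by
      rw [Subring.closure_le]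
      rintro y (⟨r, rfl⟩ | hy)
      · show iterateFrobenius K p ((a : ℕ) * m) _ = RingHom.id K _
        rw [iterateFrobenius_def, RingHom.id_apply, ← map_pow, hexp,
          FiniteField.pow_card_pow]
      · show iterateFrobenius K p ((a : ℕ) * m) y = RingHom.id K y
        rw [iterateFrobenius_def, RingHom.id_apply, hexp]
        exact (hroot_iff y).mp hy
    have hx' : iterateFrobenius K p ((a : ℕ) * m) x = RingHom.id K x := hle hx
    rw [iterateFrobenius_def, RingHom.id_apply, hexp] at hx'
    exact (hroot_iff x).mpr hx'
  have hcardK : Fintype.card K = q ^ m := by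
    rw [← key]
    exact (Fintype.card_congr ((Equiv.setCongr huniv).trans (Equiv.Set.univ K))).symm
  have hc : Fintype.card K = q ^ finrank F K := card_eq_pow_finrank (K := F) (V := K)
  exact Nat.pow_right_injective hq (hc.symm.trans hcardK)

/-- The `q`-power Frobenius on a finite extension of `F`, as an `F`-linear map. -/
def frobL (K : Type*) [Field K] [Fintype K] [Algebra F K] : K →ₗ[F] K where
  toFun x := x ^ Fintype.card F
  map_add' x y := by
    obtain ⟨p, hchar⟩ := CharP.exists F
    haveI := hchar
    obtain ⟨a, hp, hF⟩ := FiniteField.card F p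
    haveI := Fact.mk hp
    haveI : CharP K p := charP_of_injective_algebraMap (algebraMap F K).injective p
    show (x + y) ^ Fintype.card F = x ^ Fintype.card F + y ^ Fintype.card F
    rw [hF]
    exact add_pow_char_pow x y p _
  map_smul' c x := by
    simp only [RingHom.id_apply, Algebra.smul_def, mul_pow, ← map_pow,
      FiniteField.pow_card]

lemma frobL_pow_apply (K : Type*) [Field K] [Fintype K] [Algebra F K] (j : ℕ) (x : K) :
    ((frobL F K) ^ j) x = x ^ (Fintype.card F) ^ j := by
  induction j with
  | zero => simp
  | succ j ih =>
    rw [pow_succ', Module.End.mul_apply, ih]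
    show (x ^ Fintype.card F ^ j) ^ Fintype.card F = _
    rw [← pow_mul, ← pow_succ]

theorem mrd_aux {F : Type*} [Field F] [Fintype F] (m n δ : ℕ)
    (hδ : 0 < δ) (hδn : δ ≤ n) (hnm : n ≤ m) :
    ∃ C : Submodule F (Matrix (Fin m) (Fin n) F),
      finrank F C = m * (n - δ + 1) ∧ ∀ A ∈ C, A ≠ 0 → δ ≤ A.rank := by
  classical
  have hm : m ≠ 0 := by omega
  set q := Fintype.card F with hqdef
  have hq1 : 1 < q := Fintype.one_lt_card
  set K := MRDExt F m with hKdef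
  haveI : Fintype K := Fintype.ofFinite K
  have hrK : finrank F K = m := finrank_MRDExt F m hm
  set k := n - δ + 1 with hk
  have hk1 : 1 ≤ k := by omega
  have hkn : k ≤ n := by omega
  set φ : K →ₗ[F] K := frobL F K with hφ
  set Lm : (Fin k → K) → (K →ₗ[F] K) :=
    fun a => ∑ i : Fin k, ((Algebra.lmul F K (a i)) ∘ₗ (φ ^ (i : ℕ))) with hLm
  have hLm_apply : ∀ (a : Fin k → K) (x : K), Lm a x = ∑ i : Fin k, a i * x ^ q ^ (i : ℕ) := by
    intro a x
    rw [hLm]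
    simp only [LinearMap.coe_sum, Finset.sum_apply, LinearMap.comp_apply]
    refine Finset.sum_congr rfl fun i _ => ?_
    rw [frobL_pow_apply]
    rfl
  -- kernel bound
  have hker : ∀ a : Fin k → K, a ≠ 0 → finrank F (LinearMap.ker (Lm a)) ≤ k - 1 := by
    intro a ha
    obtain ⟨j, hj⟩ : ∃ j, a j ≠ 0 := by
      by_contra h
      push_neg at h
      exact ha (funext h)
    set P : Polynomial K := ∑ i : Fin k, Polynomial.monomial (q ^ (i : ℕ)) (a i) with hP
    have hPne : P ≠ 0 := by
      intro h0
      have hcoeff : P.coeff (q ^ (j : ℕ)) = a j := by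
        rw [hP, Polynomial.finset_sum_coeff]
        rw [Finset.sum_eq_single j]
        · simp [Polynomial.coeff_monomial]
        · intro i _ hij
          rw [Polynomial.coeff_monomial, if_neg]
          intro h
          exact hij (Fin.ext (Nat.pow_right_injective hq1 h))
        · intro h
          exact absurd (Finset.mem_univ j) h
      rw [h0] at hcoeff
      simp only [Polynomial.coeff_zero] at hcoeff
      exact hj hcoeff.symm
    have hdeg : P.natDegree ≤ q ^ (k - 1) := by
      apply Polynomial.natDegree_sum_le_of_forall_le
      intro i _
      refine le_trans (Polynomial.natDegree_monomial_le _) ?_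
      exact Nat.pow_le_pow_right (by omega) (by omega)
    have hsub : (LinearMap.ker (Lm a) : Set K).toFinset ⊆ P.roots.toFinset := by
      intro x hx
      rw [Set.mem_toFinset] at hx
      rw [Multiset.mem_toFinset, Polynomial.mem_roots hPne]
      have hx0 : Lm a x = 0 := hx
      show P.IsRoot x
      rw [Polynomial.IsRoot, hP, Polynomial.eval_finset_sum]
      simp only [Polynomial.eval_monomial]
      rw [← hLm_apply]
      exact hx0
    have hcard : Fintype.card (LinearMap.ker (Lm a)) ≤ q ^ (k - 1) := by
      calc Fintype.card (LinearMap.ker (Lm a))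
          = (LinearMap.ker (Lm a) : Set K).toFinset.card := (Set.toFinset_card _).symm
        _ ≤ P.roots.toFinset.card := Finset.card_le_card hsub
        _ ≤ Multiset.card P.roots := Multiset.toFinset_card_le _
        _ ≤ P.natDegree := Polynomial.card_roots' P
        _ ≤ q ^ (k - 1) := hdeg
    have hcard' : Fintype.card (LinearMap.ker (Lm a))
        = q ^ finrank F (LinearMap.ker (Lm a)) :=
      card_eq_pow_finrank (K := F)
    rw [hcard'] at hcard
    exact (Nat.pow_le_pow_iff_right hq1).mp hcard
  -- the embedding ι : F^n → K
  let bK : Basis (Fin m) F K := Module.finBasisOfFinrankEq F K hrK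
  let E : K ≃ₗ[F] (Fin m → F) := bK.equivFun
  let J : (Fin n → F) →ₗ[F] (Fin m → F) :=
    LinearMap.pi (fun i : Fin m =>
      if h : (i : ℕ) < n then LinearMap.proj (⟨i, h⟩ : Fin n) else 0)
  have hJval : ∀ (x : Fin n → F) (j : Fin n), J x (Fin.castLE hnm j) = x j := by
    intro x j
    simp only [J, LinearMap.pi_apply]
    rw [dif_pos (show ((Fin.castLE hnm j : Fin m) : ℕ) < n from j.isLt)]
    rfl
  have hJ : Function.Injective J := by
    intro x y hxy
    funext j
    have := congrFun hxy (Fin.castLE hnm j)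
    rwa [hJval, hJval] at this
  let ι : (Fin n → F) →ₗ[F] K := E.symm.toLinearMap ∘ₗ J
  have hι : Function.Injective ι := E.symm.injective.comp hJ
  -- additivity of Lm
  have hLadd : ∀ a b : Fin k → K, Lm (a + b) = Lm a + Lm b := by
    intro a b
    rw [hLm, ← Finset.sum_add_distrib]
    refine Finset.sum_congr rfl fun i _ => ?_
    show (Algebra.lmul F K ((a i) + (b i))) ∘ₗ _ = _
    rw [map_add, LinearMap.add_comp]
  have hLsmul : ∀ (c : F) (a : Fin k → K), Lm (c • a) = c • Lm a := by
    intro c a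
    rw [hLm, Finset.smul_sum]
    refine Finset.sum_congr rfl fun i _ => ?_
    show (Algebra.lmul F K (c • (a i))) ∘ₗ _ = _
    rw [map_smul, LinearMap.smul_comp]
  -- the code
  let Θ : (Fin k → K) →ₗ[F] Matrix (Fin m) (Fin n) F :=
    { toFun := fun a => LinearMap.toMatrix' (E.toLinearMap ∘ₗ Lm a ∘ₗ ι)
      map_add' := by
        intro a b
        show LinearMap.toMatrix' (E.toLinearMap ∘ₗ Lm (a + b) ∘ₗ ι)
          = LinearMap.toMatrix' (E.toLinearMap ∘ₗ Lm a ∘ₗ ι)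
            + LinearMap.toMatrix' (E.toLinearMap ∘ₗ Lm b ∘ₗ ι)
        rw [hLadd, LinearMap.add_comp, LinearMap.comp_add, map_add]
      map_smul' := by
        intro c a
        show LinearMap.toMatrix' (E.toLinearMap ∘ₗ Lm (c • a) ∘ₗ ι)
          = RingHom.id F c • LinearMap.toMatrix' (E.toLinearMap ∘ₗ Lm a ∘ₗ ι)
        rw [hLsmul, LinearMap.smul_comp, LinearMap.comp_smul, map_smul]
        rfl }
  -- rank of matrices coming from nonzero a
  have hrank0 : ∀ a : Fin k → K,
      (Θ a).rank = finrank F (LinearMap.range (Lm a ∘ₗ ι)) := by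
    intro a
    have h1 : (Θ a).mulVecLin = E.toLinearMap ∘ₗ Lm a ∘ₗ ι := by
      rw [show (Θ a) = LinearMap.toMatrix' (E.toLinearMap ∘ₗ Lm a ∘ₗ ι) from rfl,
        ← Matrix.toLin'_apply', Matrix.toLin'_toMatrix']
    rw [Matrix.rank, h1, LinearMap.range_comp, LinearEquiv.finrank_map_eq]
  have hkerle : ∀ a : Fin k → K, a ≠ 0 →
      finrank F (LinearMap.ker (Lm a ∘ₗ ι)) ≤ k - 1 := by
    intro a ha
    calc finrank F (LinearMap.ker (Lm a ∘ₗ ι))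
        = finrank F (Submodule.map ι (LinearMap.ker (Lm a ∘ₗ ι))) :=
          (Submodule.equivMapOfInjective ι hι _).finrank_eq
      _ ≤ finrank F (LinearMap.ker (Lm a)) := by
          apply Submodule.finrank_mono
          rw [LinearMap.ker_comp]
          exact Submodule.map_comap_le _ _
      _ ≤ k - 1 := hker a ha
  have hrank : ∀ a : Fin k → K, a ≠ 0 → δ ≤ (Θ a).rank := by
    intro a ha
    rw [hrank0]
    have h3 := LinearMap.finrank_range_add_finrank_ker (Lm a ∘ₗ ι)
    rw [Module.finrank_fin_fun] at h3
    have h4 := hkerle a ha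
    omega
  -- injectivity of Θ
  have hΘinj : Function.Injective Θ := by
    rw [← LinearMap.ker_eq_bot]
    rw [Submodule.eq_bot_iff]
    intro a haker
    by_contra hne
    have hΘ0 : LinearMap.toMatrix' (E.toLinearMap ∘ₗ Lm a ∘ₗ ι) = 0 := haker
    have hzero : E.toLinearMap ∘ₗ Lm a ∘ₗ ι = 0 := by
      have := congrArg (Matrix.toLin') hΘ0
      rwa [Matrix.toLin'_toMatrix', map_zero] at this
    have hcomp0 : Lm a ∘ₗ ι = 0 := by
      apply LinearMap.ext
      intro x
      have h0 : (E.toLinearMap ∘ₗ Lm a ∘ₗ ι) x = 0 := by rw [hzero]; rfl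
      have hE : E ((Lm a ∘ₗ ι) x) = 0 := h0
      simpa using E.map_eq_zero_iff.mp hE
    have hle : LinearMap.range ι ≤ LinearMap.ker (Lm a) := by
      rintro _ ⟨y, rfl⟩
      show Lm a (ι y) = 0
      have : (Lm a ∘ₗ ι) y = 0 := by rw [hcomp0]; rfl
      exact this
    have h5 : finrank F (LinearMap.range ι) = n := by
      rw [LinearMap.finrank_range_of_inj hι, Module.finrank_fin_fun]
    have h6 : finrank F (LinearMap.range ι) ≤ finrank F (LinearMap.ker (Lm a)) :=
      Submodule.finrank_mono hle
    have h7 := hker a hne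
    omega
  refine ⟨LinearMap.range Θ, ?_, ?_⟩
  · rw [LinearMap.finrank_range_of_inj hΘinj]
    rw [Module.finrank_pi_fintype, Finset.sum_const, Finset.card_univ, Fintype.card_fin,
      hrK, smul_eq_mul, mul_comm]
  · rintro A ⟨a, rfl⟩ hA
    apply hrank
    intro h0
    rw [h0, map_zero] at hA
    exact hA rfl

end MRDAux

open Module

theorem stmt_4 {F : Type*} [Field F] [Fintype F] (m n δ : ℕ)
    (hm : 0 < m) (hn : 0 < n) (hδ : 0 < δ) (hδmn : δ ≤ min m n) :
    ∃ C : Submodule F (Matrix (Fin m) (Fin n) F),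
      finrank F C = max m n * (min m n - δ + 1) ∧
      ∀ A ∈ C, A ≠ 0 → δ ≤ A.rank := by
  rcases le_total n m with h | h
  · obtain ⟨C, hC1, hC2⟩ := mrd_aux (F := F) m n δ hδ (le_trans hδmn (min_le_right m n)) h
    refine ⟨C, ?_, hC2⟩
    rw [hC1, max_eq_left h, min_eq_right h]
  · obtain ⟨C, hC1, hC2⟩ := mrd_aux (F := F) n m δ hδ (le_trans hδmn (min_le_left m n)) h
    let e : Matrix (Fin n) (Fin m) F ≃ₗ[F] Matrix (Fin m) (Fin n) F :=
      Matrix.transposeLinearEquiv (Fin n) (Fin m) F F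
    refine ⟨Submodule.map (e : Matrix (Fin n) (Fin m) F →ₗ[F] Matrix (Fin m) (Fin n) F) C, ?_, ?_⟩
    · rw [LinearEquiv.finrank_map_eq, hC1, max_eq_right h, min_eq_left h]
    · rintro A ⟨B, hB, rfl⟩ hA
      have hB0 : B ≠ 0 := by
        intro h0
        rw [h0, map_zero] at hA
        exact hA rfl
      have he : (e : Matrix (Fin n) (Fin m) F →ₗ[F] Matrix (Fin m) (Fin n) F) B
          = Matrix.transpose B := by
        rw [LinearEquiv.coe_coe]
        exact Matrix.transposeLinearEquiv_apply (Fin n) (Fin m) F F B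
      rw [he, Matrix.rank_transpose]
      exact hC2 B hB hB0
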